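/- arXiv:2210.00387 — 2 statements merged into one kernel-verified Lean document; each statement's English description precedes it below -/
import Mathlib

section
/- Let A be a unital C*-algebra and L a Lip-norm on A (a seminorm with values in [0,∞], dense finite domain, vanishing exactly on scalars, whose induced metric d_L(μ,ν) = sup{|μ(a)-ν(a)| : L(a) ≤ 1} metrizes the weak-* topology on the state space). Let (H,π) be a faithful *-representation of A and K a dense subspace of H. Then for every state μ on A and every ε > 0 there exists a finite convex combination ν of vector states given by unit vectors in K such that |μ(a) - ν(a)| ≤ ε·L(a) for all a ∈ A. -/
open scoped ENNReal NNReal ComplexOrder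

noncomputable section

/-- A state on a unital C*-algebra: a unital positive continuous linear functional. -/
def IsState {A : Type*} [NormedRing A] [NormedAlgebra ℂ A] [StarRing A]
    (μ : A →L[ℂ] ℂ) : Prop :=
  μ 1 = 1 ∧ ∀ a : A, 0 ≤ μ (star a * a)

section Inner

variable {A : Type*} [CStarAlgebra A] [PartialOrder A] [StarOrderedRing A]

lemma aux_nonneg_sqrt {y : A} (hy : 0 ≤ y) : ∃ w : A, y = star w * w := by
  refine ⟨CFC.sqrt y, ?_⟩
  rw [(IsSelfAdjoint.of_nonneg (CFC.sqrt_nonneg y)).star_eq, CFC.sqrt_mul_sqrt_self y hy]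

lemma isState_nonneg (μ : A →L[ℂ] ℂ) (hμ : IsState μ) {y : A} (hy : 0 ≤ y) : 0 ≤ μ y := by
  obtain ⟨w, rfl⟩ := aux_nonneg_sqrt hy
  exact hμ.2 w

lemma isState_real_bound (μ : A →L[ℂ] ℂ) (hμ : IsState μ) {x : A}
    (hx : IsSelfAdjoint x) : (μ x).im = 0 ∧ |(μ x).re| ≤ ‖x‖ := by
  have halg : ∀ r : ℝ, μ (algebraMap ℝ A r) = (r : ℂ) := by
    intro r
    rw [Algebra.algebraMap_eq_smul_one, μ.map_smul_of_tower]
    simp [hμ.1]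
  have hub : 0 ≤ μ (algebraMap ℝ A ‖x‖ - x) :=
    isState_nonneg μ hμ (sub_nonneg.mpr hx.le_algebraMap_norm_self)
  have hlb : 0 ≤ μ (x - -algebraMap ℝ A ‖x‖) :=
    isState_nonneg μ hμ (sub_nonneg.mpr hx.neg_algebraMap_norm_le_self)
  rw [map_sub, halg] at hub
  rw [map_sub, map_neg, halg] at hlb
  rw [Complex.nonneg_iff] at hub hlb
  simp only [Complex.sub_re, Complex.sub_im, Complex.ofReal_re, Complex.ofReal_im,
    Complex.neg_re, Complex.neg_im] at hub hlb
  constructor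
  · linarith [hub.2, hlb.2]
  · rw [abs_le]; constructor <;> linarith [hub.1, hlb.1]

lemma aux_pullback {H : Type*} [NormedAddCommGroup H] [InnerProductSpace ℂ H] [CompleteSpace H]
    (π : A →⋆ₐ[ℂ] (H →L[ℂ] H)) (hπ : Function.Injective π) {b : A} (hb : IsSelfAdjoint b)
    (hpos : ∀ ξ : H, 0 ≤ (inner ℂ ξ (π b ξ) : ℂ).re) : ∃ w : A, b = star w * w := by
  set r : A := b⁻ with hr
  have hrn : 0 ≤ r := CFC.negPart_nonneg b
  obtain ⟨s, hs⟩ := aux_nonneg_sqrt hrn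
  have hrsa : IsSelfAdjoint r := IsSelfAdjoint.of_nonneg hrn
  have hadj : ContinuousLinearMap.adjoint (π r) = π r := by
    rw [← ContinuousLinearMap.star_eq_adjoint, ← map_star, hrsa.star_eq]
  have hmove : ∀ (ξ η : H), (inner ℂ ξ (π r η) : ℂ) = inner ℂ (π r ξ) η := by
    intro ξ η
    conv_lhs => rw [← hadj]
    exact ContinuousLinearMap.adjoint_inner_right _ _ _
  have h4 : ∀ ζ : H, (inner ℂ ζ (π r ζ) : ℂ) = ((‖π s ζ‖ : ℂ)) ^ 2 := by
    intro ζ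
    rw [hs, map_mul, map_star, ContinuousLinearMap.mul_apply]
    rw [ContinuousLinearMap.star_eq_adjoint, ContinuousLinearMap.adjoint_inner_right]
    exact inner_self_eq_norm_sq_to_K _
  have h3 : r * b * r = -(r * r * r) := by
    conv_lhs => rw [← CFC.posPart_sub_negPart b hb]
    rw [mul_sub, sub_mul, ← hr, CFC.negPart_mul_posPart, zero_mul, zero_sub]
  have hszero : ∀ ξ : H, π s (π r ξ) = 0 := by
    intro ξ
    have e1 : (inner ℂ ξ (π (r * b * r) ξ) : ℂ) = inner ℂ (π r ξ) (π b (π r ξ)) := by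
      rw [map_mul, map_mul, ContinuousLinearMap.mul_apply, ContinuousLinearMap.mul_apply,
        hmove]
    have e2 : (inner ℂ ξ (π (r * r * r) ξ) : ℂ) = ((‖π s (π r ξ)‖ : ℂ)) ^ 2 := by
      rw [map_mul, map_mul, ContinuousLinearMap.mul_apply, ContinuousLinearMap.mul_apply,
        hmove]
      exact h4 _
    have e3 : (inner ℂ ξ (π (r * b * r) ξ) : ℂ) = -(((‖π s (π r ξ)‖ : ℂ)) ^ 2) := by
      rw [h3, map_neg, ContinuousLinearMap.neg_apply, inner_neg_right, e2]
    have e4 : 0 ≤ (inner ℂ ξ (π (r * b * r) ξ) : ℂ).re := e1 ▸ hpos (π r ξ)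
    rw [e3] at e4
    simp only [Complex.neg_re, ← Complex.ofReal_pow, Complex.ofReal_re] at e4
    have : ‖π s (π r ξ)‖ = 0 := by nlinarith [norm_nonneg (π s (π r ξ))]
    simpa [norm_eq_zero] using this
  have hsr : s * r = 0 := by
    apply hπ
    rw [map_mul, map_zero]
    ext ξ
    simpa using hszero ξ
  have hrr : r * r = 0 := by
    nth_rewrite 1 [hs]
    rw [mul_assoc, hsr, mul_zero]
  have hr0 : r = 0 := by
    have h5 : ‖r‖ * ‖r‖ = 0 := by
      rw [← CStarRing.norm_star_mul_self (x := r), hrsa.star_eq, hrr, norm_zero]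
    have : ‖r‖ = 0 := by nlinarith [norm_nonneg r]
    simpa using this
  have hbp : b = b⁺ := by
    conv_lhs => rw [← CFC.posPart_sub_negPart b hb]
    rw [← hr, hr0, sub_zero]
  rw [hbp]
  exact aux_nonneg_sqrt (CFC.posPart_nonneg b)

lemma fell_approx {H : Type*} [NormedAddCommGroup H] [InnerProductSpace ℂ H] [CompleteSpace H]
    (π : A →⋆ₐ[ℂ] (H →L[ℂ] H)) (hπ : Function.Injective π)
    (K : Submodule ℂ H) (hK : Dense (K : Set H))
    (μ : A →L[ℂ] ℂ) (hμ : IsState μ) (G : Finset A) (hG : ∀ g ∈ G, IsSelfAdjoint g)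
    {δ : ℝ} (hδ : 0 < δ) :
    ∃ (n : ℕ) (t : Fin n → ℝ) (ξ : Fin n → H),
      (∀ i, 0 ≤ t i) ∧ (∑ i, t i = 1) ∧ (∀ i, ξ i ∈ K ∧ ‖ξ i‖ = 1) ∧
      ∀ g ∈ G, ‖μ g - ∑ i, (t i : ℂ) * (inner ℂ (ξ i) (π g (ξ i)) : ℂ)‖ ≤ δ := by
  classical
  set V : H → ({x // x ∈ G} → ℝ) := fun ξ g => (inner ℂ ξ (π (g : A) ξ) : ℂ).re with hV
  set S : Set ({x // x ∈ G} → ℝ) := V '' {ξ : H | ξ ∈ K ∧ ‖ξ‖ = 1} with hS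
  set vμ : ({x // x ∈ G} → ℝ) := fun g => (μ (g : A)).re with hvμ
  have hcl : vμ ∈ closure (convexHull ℝ S) := by
    by_contra hnot
    obtain ⟨f, u, hfu, hux⟩ :=
      geometric_hahn_banach_closed_point ((convex_convexHull ℝ S).closure) isClosed_closure hnot
    set c : {x // x ∈ G} → ℝ := fun g => f (Pi.single g 1) with hc
    have hf : ∀ p : ({x // x ∈ G} → ℝ), f p = ∑ g, p g * c g := by
      intro p
      have hp : p = ∑ g, (p g : ℝ) • (Pi.single g 1 : {x // x ∈ G} → ℝ) := by
        conv_lhs => rw [← Finset.univ_sum_single p]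
        refine Finset.sum_congr rfl fun g _ => ?_
        rw [← Pi.single_smul, smul_eq_mul, mul_one]
      conv_lhs => rw [hp]
      rw [map_sum]
      simp only [map_smul, smul_eq_mul]
      rfl
    set a₀ : A := ∑ g : {x // x ∈ G}, ((c g : ℝ) : ℂ) • (g : A) with ha₀
    have hkey : ∀ ξ : H,
        (inner ℂ ξ (π a₀ ξ) : ℂ) = ∑ g, ((c g : ℝ) : ℂ) * (inner ℂ ξ (π (g : A) ξ) : ℂ) := by
      intro ξ
      rw [ha₀, map_sum, ContinuousLinearMap.sum_apply, inner_sum]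
      refine Finset.sum_congr rfl fun g _ => ?_
      rw [map_smul, ContinuousLinearMap.smul_apply, inner_smul_right]
    have hkeyre : ∀ ξ : H,
        (inner ℂ ξ (π a₀ ξ) : ℂ).re = ∑ g, c g * (inner ℂ ξ (π (g : A) ξ) : ℂ).re := by
      intro ξ
      rw [hkey, Complex.re_sum]
      exact Finset.sum_congr rfl fun g _ => Complex.re_ofReal_mul _ _
    have ha₀sa : IsSelfAdjoint a₀ := by
      rw [IsSelfAdjoint, ha₀, star_sum]
      refine Finset.sum_congr rfl fun g _ => ?_
      rw [star_smul, Complex.star_def, Complex.conj_ofReal, (hG g g.2).star_eq]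
    have hKb : ∀ ξ : H, ξ ∈ K → (inner ℂ ξ (π a₀ ξ) : ℂ).re ≤ u * ‖ξ‖ ^ 2 := by
      intro ξ hξ
      rcases eq_or_ne ξ 0 with rfl | hne
      · simp
      · have hnorm : (0:ℝ) < ‖ξ‖ := norm_pos_iff.mpr hne
        set ζ : H := ((‖ξ‖⁻¹ : ℝ) : ℂ) • ξ with hζ
        have hζK : ζ ∈ K := K.smul_mem _ hξ
        have hζn : ‖ζ‖ = 1 := by
          rw [hζ, norm_smul, Complex.norm_real, Real.norm_eq_abs,
            abs_of_pos (inv_pos.mpr hnorm), inv_mul_cancel₀ hnorm.ne']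
        have hmem : V ζ ∈ closure (convexHull ℝ S) :=
          subset_closure (subset_convexHull ℝ S ⟨ζ, ⟨hζK, hζn⟩, rfl⟩)
        have hlt : f (V ζ) < u := hfu _ hmem
        rw [hf] at hlt
        have hVζ : ∀ g : A,
            (inner ℂ ζ (π g ζ) : ℂ).re = ‖ξ‖⁻¹ ^ 2 * (inner ℂ ξ (π g ξ) : ℂ).re := by
          intro g
          rw [hζ, map_smul, inner_smul_left, inner_smul_right, Complex.conj_ofReal,
            ← mul_assoc, ← Complex.ofReal_mul, Complex.re_ofReal_mul, sq]
        have hsum : (∑ g, V ζ g * c g) = ‖ξ‖⁻¹ ^ 2 * (inner ℂ ξ (π a₀ ξ) : ℂ).re := by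
          rw [hkeyre, Finset.mul_sum]
          refine Finset.sum_congr rfl fun g _ => ?_
          show (inner ℂ ζ (π (g : A) ζ) : ℂ).re * c g = _
          rw [hVζ (g : A)]; ring
        rw [hsum] at hlt
        have h2 : (0:ℝ) < ‖ξ‖ ^ 2 := by positivity
        have hinv : ‖ξ‖⁻¹ * ‖ξ‖ = 1 := inv_mul_cancel₀ hnorm.ne'
        have h3 : ‖ξ‖⁻¹ ^ 2 * (inner ℂ ξ (π a₀ ξ) : ℂ).re * ‖ξ‖ ^ 2
            = (inner ℂ ξ (π a₀ ξ) : ℂ).re := by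
          field_simp
        linarith [mul_lt_mul_of_pos_right hlt h2, h3.symm.le, h3.le]
    set b : A := (u : ℂ) • 1 - a₀ with hb
    have hbsa : IsSelfAdjoint b := by
      rw [hb, IsSelfAdjoint, star_sub, star_smul, Complex.star_def, Complex.conj_ofReal,
        star_one, ha₀sa.star_eq]
    have hcont : Continuous fun ξ : H => u * ‖ξ‖ ^ 2 - (inner ℂ ξ (π a₀ ξ) : ℂ).re :=
      (continuous_const.mul (continuous_norm.pow 2)).sub
        (Complex.continuous_re.comp (continuous_id.inner ((π a₀).continuous)))
    have hclosed : IsClosed {ξ : H | 0 ≤ u * ‖ξ‖ ^ 2 - (inner ℂ ξ (π a₀ ξ) : ℂ).re} :=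
      isClosed_le continuous_const hcont
    have hall : ∀ ξ : H, (inner ℂ ξ (π a₀ ξ) : ℂ).re ≤ u * ‖ξ‖ ^ 2 := by
      intro ξ
      have hsub : (K : Set H) ⊆ {ξ : H | 0 ≤ u * ‖ξ‖ ^ 2 - (inner ℂ ξ (π a₀ ξ) : ℂ).re} :=
        fun ζ hζ => sub_nonneg.mpr (hKb ζ hζ)
      have hmin := closure_minimal hsub hclosed
      rw [hK.closure_eq] at hmin
      exact sub_nonneg.mp (hmin (Set.mem_univ ξ))
    have hbpos : ∀ ξ : H, 0 ≤ (inner ℂ ξ (π b ξ) : ℂ).re := by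
      intro ξ
      have hval : (inner ℂ ξ (π b ξ) : ℂ) = (u:ℂ) * ((‖ξ‖:ℂ) ^ 2) - inner ℂ ξ (π a₀ ξ) := by
        rw [hb, map_sub, map_smul, map_one, ContinuousLinearMap.sub_apply,
          ContinuousLinearMap.smul_apply, ContinuousLinearMap.one_apply, inner_sub_right,
          inner_smul_right, inner_self_eq_norm_sq_to_K]
        norm_num
      rw [hval]
      
      have : ((u:ℂ) * ((‖ξ‖:ℂ) ^ 2)).re = u * ‖ξ‖ ^ 2 := by
        rw [← Complex.ofReal_pow, Complex.re_ofReal_mul, Complex.ofReal_re]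
      rw [Complex.sub_re, this]
      linarith [hall ξ]
    obtain ⟨w, hw⟩ := aux_pullback π hπ hbsa hbpos
    have h0 : 0 ≤ μ b := hw ▸ hμ.2 w
    have hμb : μ b = (u : ℂ) - μ a₀ := by
      rw [hb, map_sub, map_smul, hμ.1, smul_eq_mul, mul_one]
    have hμa₀ : (μ a₀).re = ∑ g, c g * (μ (g:A)).re := by
      rw [ha₀, map_sum, Complex.re_sum]
      refine Finset.sum_congr rfl fun g _ => ?_
      rw [map_smul, smul_eq_mul, Complex.re_ofReal_mul]
    rw [hμb, Complex.nonneg_iff] at h0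
    have h1 := h0.1
    rw [Complex.sub_re, Complex.ofReal_re] at h1
    rw [hf] at hux
    have hvsum : (∑ g, vμ g * c g) = (μ a₀).re := by
      rw [hμa₀]
      exact Finset.sum_congr rfl fun g _ => by rw [hvμ]; ring
    rw [hvsum] at hux
    linarith
  rw [Metric.mem_closure_iff] at hcl
  obtain ⟨p, hp, hdist⟩ := hcl δ hδ
  rw [mem_convexHull_iff_exists_fintype] at hp
  obtain ⟨ι, hι, w, z, hw0, hw1, hz, hzsum⟩ := hp
  choose Ξ hΞ hVΞ using hz
  set e := (Fintype.equivFin ι).symm with he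
  refine ⟨Fintype.card ι, fun i => w (e i), fun i => Ξ (e i), fun i => hw0 _, ?_,
    fun i => (hΞ (e i)), ?_⟩
  · rw [Equiv.sum_comp e w, hw1]
  · intro g hg
    set gg : {x // x ∈ G} := ⟨g, hg⟩ with hgg
    have hμg : μ g = ((vμ gg : ℝ) : ℂ) := by
      have him := (isState_real_bound μ hμ (hG g hg)).1
      refine Complex.ext ?_ ?_
      · simp [hvμ, hgg]
      · simp [him, hvμ]
    have hinner_real : ∀ x : H,
        (inner ℂ x (π g x) : ℂ) = (((inner ℂ x (π g x) : ℂ).re : ℝ) : ℂ) := by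
      intro x
      have hadjg : ContinuousLinearMap.adjoint (π g) = π g := by
        rw [← ContinuousLinearMap.star_eq_adjoint, ← map_star, (hG g hg).star_eq]
      have hconj : (starRingEnd ℂ) (inner ℂ x (π g x) : ℂ) = inner ℂ x (π g x) := by
        rw [inner_conj_symm]
        conv_lhs => rw [← hadjg]
        rw [ContinuousLinearMap.adjoint_inner_left]
      rw [Complex.conj_eq_iff_im] at hconj
      exact Complex.ext (by simp) (by simp [hconj])
    have hps : p gg = ∑ i : ι, w i * (inner ℂ (Ξ i) (π g (Ξ i)) : ℂ).re := by
      rw [← hzsum, Finset.sum_apply]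
      refine Finset.sum_congr rfl fun i _ => ?_
      rw [Pi.smul_apply, smul_eq_mul, ← hVΞ i]
    have hsum : (∑ i, ((w (e i) : ℝ) : ℂ) * (inner ℂ (Ξ (e i)) (π g (Ξ (e i))) : ℂ))
        = ((p gg : ℝ) : ℂ) := by
      rw [hps, Complex.ofReal_sum]
      rw [← Equiv.sum_comp e (fun i => ((w i * (inner ℂ (Ξ i) (π g (Ξ i)) : ℂ).re : ℝ) : ℂ))]
      refine Finset.sum_congr rfl fun i _ => ?_
      rw [Complex.ofReal_mul]
      congr 1
      exact hinner_real (Ξ (e i))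
    rw [hμg, hsum, ← Complex.ofReal_sub, Complex.norm_real]
    have hco := dist_le_pi_dist vμ p gg
    rw [Real.dist_eq] at hco
    rw [Real.norm_eq_abs]
    exact hco.trans hdist.le

end Inner


/-- Let `A` be a unital C*-algebra and `L` a Lip-norm on `A` (a `[0,∞]`-valued
seminorm with dense finite domain, vanishing exactly on scalars, lower semicontinuous, and
satisfying Rieffel's total-boundedness criterion, equivalent to the induced metric metrizing
the weak-* topology on the state space).  Let `(H, π)` be a faithful `*`-representation of `A`
and `K` a dense subspace of `H`.  Then for every state `μ` on `A` and every `ε > 0` there is a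
finite convex combination `ν` of vector states coming from unit vectors in `K` such that
`|μ(a) − ν(a)| ≤ ε·L(a)` for all `a ∈ A`. -/
theorem stmt1 {A H : Type*}
    [NormedRing A] [StarRing A] [CStarRing A] [NormedAlgebra ℂ A] [StarModule ℂ A]
    [CompleteSpace A]
    [NormedAddCommGroup H] [InnerProductSpace ℂ H] [CompleteSpace H]
    (π : A →⋆ₐ[ℂ] (H →L[ℂ] H)) (hπ : Function.Injective π)
    (K : Submodule ℂ H) (hK : Dense (K : Set H))
    (L : A → ℝ≥0∞)
    (hLstar : ∀ a : A, L (star a) = L a)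
    (hL0 : ∀ a : A, L a = 0 ↔ ∃ z : ℂ, a = z • (1 : A))
    (hLadd : ∀ a b : A, L (a + b) ≤ L a + L b)
    (hLsmul : ∀ (z : ℂ) (a : A), L (z • a) = (‖z‖₊ : ℝ≥0∞) * L a)
    (hLdense : Dense {a : A | L a < ⊤})
    (hLlsc : LowerSemicontinuous L)
    -- Rieffel's criterion: the image of `{a sa | L a ≤ 1}` in `A/ℂ1` is totally bounded,
    -- equivalently the metric `d_L` metrizes the weak-* topology on the state space
    (hLtb : ∀ ε : ℝ, 0 < ε → ∃ F : Finset A, ∀ a : A, star a = a → L a ≤ 1 →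
      ∃ b ∈ F, ∃ t : ℝ, ‖a - b - (t : ℂ) • (1 : A)‖ ≤ ε)
    (μ : A →L[ℂ] ℂ) (hμ : IsState μ) (ε : ℝ≥0) (hε : 0 < ε) :
    ∃ (n : ℕ) (t : Fin n → ℝ) (ξ : Fin n → H),
      (∀ i, 0 ≤ t i) ∧ (∑ i, t i = 1) ∧ (∀ i, ξ i ∈ K ∧ ‖ξ i‖ = 1) ∧
      ∀ a : A,
        (‖μ a - ∑ i, (t i : ℂ) * (inner ℂ (ξ i) (π a (ξ i)) : ℂ)‖₊ : ℝ≥0∞) ≤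
          (ε : ℝ≥0∞) * L a := by
  classical
  letI : CStarAlgebra A :=
    { ‹NormedRing A›, ‹StarRing A›, ‹CompleteSpace A›, ‹CStarRing A›, ‹NormedAlgebra ℂ A›,
      ‹StarModule ℂ A› with }
  letI : PartialOrder A := CStarAlgebra.spectralOrder A
  letI : StarOrderedRing A := CStarAlgebra.spectralOrderedRing A
  have hε6 : (0:ℝ) < (ε : ℝ) / 6 := by positivity
  obtain ⟨F, hF⟩ := hLtb ((ε:ℝ)/6) hε6
  set G : Finset A := F.image (fun b => (((2:ℝ)⁻¹ : ℝ) : ℂ) • (b + star b)) with hGdef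
  have hGsa : ∀ g ∈ G, IsSelfAdjoint g := by
    intro g hg
    rw [hGdef, Finset.mem_image] at hg
    obtain ⟨b, hb, rfl⟩ := hg
    rw [IsSelfAdjoint, star_smul, Complex.star_def, Complex.conj_ofReal, star_add, star_star,
      add_comm]
  obtain ⟨n, t, ξ, ht0, ht1, hξ, happ⟩ := fell_approx π hπ K hK μ hμ G hGsa hε6
  refine ⟨n, t, ξ, ht0, ht1, hξ, ?_⟩
  set ν : A → ℂ := fun a => ∑ i, (t i : ℂ) * (inner ℂ (ξ i) (π a (ξ i)) : ℂ) with hν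
  have hν_add : ∀ x y : A, ν (x + y) = ν x + ν y := by
    intro x y
    simp only [hν, map_add, ContinuousLinearMap.add_apply, inner_add_right, mul_add]
    rw [Finset.sum_add_distrib]
  have hν_smul : ∀ (z : ℂ) (x : A), ν (z • x) = z * ν x := by
    intro z x
    simp only [hν, map_smul, ContinuousLinearMap.smul_apply, inner_smul_right]
    rw [Finset.mul_sum]
    exact Finset.sum_congr rfl fun i _ => by ring
  have hν1 : ν 1 = 1 := by
    have hi : ∀ i, (inner ℂ (ξ i) (ξ i) : ℂ) = 1 := fun i => by
      rw [inner_self_eq_norm_sq_to_K, (hξ i).2]; norm_num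
    simp only [hν, map_one, ContinuousLinearMap.one_apply, hi, mul_one]
    exact_mod_cast congrArg (fun r : ℝ => (r : ℂ)) ht1
  have hνbound : ∀ d : A, ‖ν d‖ ≤ ‖d‖ := by
    intro d
    calc ‖ν d‖ ≤ ∑ i, ‖(t i:ℂ) * (inner ℂ (ξ i) (π d (ξ i)) : ℂ)‖ := norm_sum_le _ _
      _ ≤ ∑ i, t i * ‖d‖ := by
          refine Finset.sum_le_sum fun i _ => ?_
          rw [norm_mul, Complex.norm_real, Real.norm_eq_abs, abs_of_nonneg (ht0 i)]
          refine mul_le_mul_of_nonneg_left ?_ (ht0 i)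
          calc ‖(inner ℂ (ξ i) (π d (ξ i)) : ℂ)‖ ≤ ‖ξ i‖ * ‖π d (ξ i)‖ :=
                norm_inner_le_norm _ _
            _ ≤ ‖ξ i‖ * (‖π d‖ * ‖ξ i‖) := by
                gcongr
                exact (π d).le_opNorm _
            _ ≤ ‖d‖ := by
                rw [(hξ i).2]
                simpa using NonUnitalStarAlgHom.norm_apply_le π d
      _ = ‖d‖ := by rw [← Finset.sum_mul, ht1, one_mul]
  have hμnorm : ∀ x : A, IsSelfAdjoint x → ‖μ x‖ ≤ ‖x‖ := by
    intro x hx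
    obtain ⟨him, hre⟩ := isState_real_bound μ hμ hx
    have hxr : μ x = (((μ x).re : ℝ) : ℂ) := Complex.ext rfl (by simp [him])
    rw [hxr, Complex.norm_real, Real.norm_eq_abs]
    exact hre
  -- step 1 : self-adjoint elements of Lip-norm at most one
  have hμν_sa : ∀ x : A, IsSelfAdjoint x → L x ≤ 1 → ‖μ x - ν x‖ ≤ 3 * ((ε:ℝ)/6) := by
    intro x hx hLx
    obtain ⟨b, hbF, s, hbs⟩ := hF x hx.star_eq hLx
    set g : A := (((2:ℝ)⁻¹ : ℝ) : ℂ) • (b + star b) with hg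
    have hgG : g ∈ G := by rw [hGdef]; exact Finset.mem_image_of_mem _ hbF
    set d : A := x - g - (s:ℂ) • 1 with hd
    have h2 : ‖x - star b - (s:ℂ) • (1:A)‖ ≤ (ε:ℝ)/6 := by
      have hstar : star (x - b - (s:ℂ) • (1:A)) = x - star b - (s:ℂ) • 1 := by
        rw [star_sub, star_sub, hx.star_eq, star_smul, Complex.star_def, Complex.conj_ofReal,
          star_one]
      calc ‖x - star b - (s:ℂ) • (1:A)‖ = ‖star (x - b - (s:ℂ) • (1:A))‖ := by rw [hstar]
        _ = ‖x - b - (s:ℂ) • (1:A)‖ := norm_star _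
        _ ≤ (ε:ℝ)/6 := hbs
    have h3 : d = (((2:ℝ)⁻¹ : ℝ) : ℂ) •
        ((x - b - (s:ℂ) • (1:A)) + (x - star b - (s:ℂ) • (1:A))) := by
      rw [hd, hg]
      push_cast
      module
    have hdn : ‖d‖ ≤ (ε:ℝ)/6 := by
      rw [h3, norm_smul, Complex.norm_real, Real.norm_eq_abs]
      have habs : |((2:ℝ)⁻¹ : ℝ)| = 2⁻¹ := by norm_num
      rw [habs]
      calc (2:ℝ)⁻¹ * ‖(x - b - (s:ℂ) • (1:A)) + (x - star b - (s:ℂ) • (1:A))‖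
          ≤ 2⁻¹ * (‖x - b - (s:ℂ) • (1:A)‖ + ‖x - star b - (s:ℂ) • (1:A)‖) := by
            gcongr
            exact norm_add_le _ _
        _ ≤ 2⁻¹ * ((ε:ℝ)/6 + (ε:ℝ)/6) := by gcongr
        _ = (ε:ℝ)/6 := by ring
    have hdsa : IsSelfAdjoint d := by
      rw [hd, IsSelfAdjoint, star_sub, star_sub, hx.star_eq, (hGsa g hgG).star_eq, star_smul,
        Complex.star_def, Complex.conj_ofReal, star_one]
    have hxdg : x = d + g + (s:ℂ) • 1 := by rw [hd]; abel
    have hμs : μ ((s:ℂ) • (1:A)) = (s:ℂ) := by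
      rw [map_smul, hμ.1, smul_eq_mul, mul_one]
    have hνs : ν ((s:ℂ) • (1:A)) = (s:ℂ) := by
      rw [hν_smul, hν1, mul_one]
    have hμx : μ x = μ d + μ g + (s:ℂ) := by
      conv_lhs => rw [hxdg]
      rw [map_add, map_add, hμs]
    have hνx : ν x = ν d + ν g + (s:ℂ) := by
      conv_lhs => rw [hxdg]
      rw [hν_add, hν_add, hνs]
    have hsplit : μ x - ν x = (μ d - ν d) + (μ g - ν g) := by
      rw [hμx, hνx]; ring
    have hA : ‖μ x - ν x‖ ≤ ‖μ d - ν d‖ + ‖μ g - ν g‖ := by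
      rw [hsplit]; exact norm_add_le _ _
    have hB : ‖μ d - ν d‖ ≤ ‖μ d‖ + ‖ν d‖ := norm_sub_le _ _
    have hC := (hμnorm d hdsa).trans hdn
    have hD := (hνbound d).trans hdn
    have hE : ‖μ g - ν g‖ ≤ (ε:ℝ)/6 := happ g hgG
    linarith
  -- step 2 : rescaling
  have hest : ∀ x : A, IsSelfAdjoint x → L x ≠ ⊤ →
      ‖μ x - ν x‖ ≤ 3 * ((ε:ℝ)/6) * (L x).toReal := by
    intro x hx hfin
    rcases eq_or_ne (L x) 0 with h0 | h0
    · obtain ⟨z, rfl⟩ := (hL0 x).mp h0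
      have hμz : μ (z • (1:A)) = z := by rw [map_smul, hμ.1, smul_eq_mul, mul_one]
      have hνz : ν (z • (1:A)) = z := by rw [hν_smul, hν1, mul_one]
      rw [hμz, hνz, sub_self, norm_zero, h0]
      simp
    · set cR : ℝ := (L x).toReal with hcR
      have hc0 : 0 < cR := ENNReal.toReal_pos h0 hfin
      set x' : A := ((cR⁻¹ : ℝ) : ℂ) • x with hx'
      have hx'sa : IsSelfAdjoint x' := by
        rw [hx', IsSelfAdjoint, star_smul, Complex.star_def, Complex.conj_ofReal, hx.star_eq]
      have hLxc : L x = (‖cR‖₊ : ℝ≥0∞) := by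
        rw [← ENNReal.ofReal_toReal hfin, ← hcR, ENNReal.ofReal]
        congr 1
        apply NNReal.coe_injective
        simp [Real.coe_toNNReal _ hc0.le, Real.norm_eq_abs, abs_of_pos hc0]
      have hcnn : (‖cR‖₊ : ℝ≥0) ≠ 0 := by simp [hc0.ne']
      have hLx' : L x' ≤ 1 := by
        rw [hx', hLsmul, Complex.nnnorm_real, nnnorm_inv, hLxc, ENNReal.coe_inv hcnn]
        exact le_of_eq (ENNReal.inv_mul_cancel (by exact_mod_cast hcnn) ENNReal.coe_ne_top)
      have hdiff : μ x' - ν x' = ((cR⁻¹ : ℝ) : ℂ) * (μ x - ν x) := by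
        rw [hx', map_smul, hν_smul, smul_eq_mul, mul_sub]
      have hkey := hμν_sa x' hx'sa hLx'
      rw [hdiff, norm_mul, Complex.norm_real, Real.norm_eq_abs, abs_of_pos (inv_pos.mpr hc0)]
        at hkey
      have hEq : cR * (cR⁻¹ * ‖μ x - ν x‖) = ‖μ x - ν x‖ := by field_simp
      calc ‖μ x - ν x‖ = cR * (cR⁻¹ * ‖μ x - ν x‖) := hEq.symm
        _ ≤ cR * (3 * ((ε:ℝ)/6)) := by gcongr
        _ = 3 * ((ε:ℝ)/6) * (L x).toReal := by rw [← hcR]; ring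
  -- final assembly
  intro a
  rcases eq_or_ne (L a) ⊤ with htop | htop
  · rw [htop, ENNReal.mul_top (by exact_mod_cast hε.ne')]
    exact le_top
  · set x : A := (((2:ℝ)⁻¹ : ℝ) : ℂ) • (a + star a) with hxdef
    set y : A := (-(Complex.I) * (((2:ℝ)⁻¹ : ℝ) : ℂ)) • (a - star a) with hydef
    have hxsa : IsSelfAdjoint x := by
      rw [hxdef, IsSelfAdjoint, star_smul, Complex.star_def, Complex.conj_ofReal, star_add,
        star_star, add_comm]
    have hysa : IsSelfAdjoint y := by
      have hsc : star (-(Complex.I) * (((2:ℝ)⁻¹ : ℝ) : ℂ))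
          = Complex.I * (((2:ℝ)⁻¹ : ℝ) : ℂ) := by
        simp [Complex.star_def, map_mul, Complex.conj_I, Complex.conj_ofReal]
      rw [hydef, IsSelfAdjoint, star_smul, star_sub, star_star, hsc, ← neg_sub a (star a),
        smul_neg, ← neg_smul, neg_mul]
    have hII : Complex.I * (-(Complex.I) * (((2:ℝ)⁻¹ : ℝ) : ℂ)) = (((2:ℝ)⁻¹ : ℝ) : ℂ) := by
      rw [show Complex.I * (-(Complex.I) * (((2:ℝ)⁻¹ : ℝ) : ℂ))
          = -(Complex.I * Complex.I) * (((2:ℝ)⁻¹ : ℝ) : ℂ) by ring, Complex.I_mul_I]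
      ring
    have ha : a = x + Complex.I • y := by
      rw [hxdef, hydef, smul_smul, hII, ← smul_add,
        show (a + star a) + (a - star a) = (2:ℂ) • a by rw [two_smul]; abel, smul_smul,
        show (((2:ℝ)⁻¹ : ℝ) : ℂ) * 2 = 1 by push_cast; norm_num, one_smul]
    have hhalf : (‖(((2:ℝ)⁻¹ : ℝ) : ℂ)‖₊ : ℝ≥0∞) * ((L a) + (L a)) = L a := by
      have hnn2 : ‖((2:ℝ)⁻¹ : ℝ)‖₊ = (2⁻¹ : ℝ≥0) := by
        apply NNReal.coe_injective
        simp [Real.norm_eq_abs]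
      rw [Complex.nnnorm_real, hnn2, ← two_mul, ENNReal.coe_inv (by norm_num), ← mul_assoc]
      norm_num
      rw [ENNReal.inv_mul_cancel two_ne_zero ENNReal.ofNat_ne_top, one_mul]
    have hLx : L x ≤ L a := by
      rw [hxdef, hLsmul]
      calc (‖(((2:ℝ)⁻¹ : ℝ) : ℂ)‖₊ : ℝ≥0∞) * L (a + star a)
          ≤ (‖(((2:ℝ)⁻¹ : ℝ) : ℂ)‖₊ : ℝ≥0∞) * (L a + L (star a)) := by
            gcongr
            exact hLadd _ _
        _ = L a := by rw [hLstar]; exact hhalf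
    have hLy : L y ≤ L a := by
      rw [hydef, hLsmul]
      have hnn : ‖(-(Complex.I) * (((2:ℝ)⁻¹ : ℝ) : ℂ))‖₊ = ‖(((2:ℝ)⁻¹ : ℝ) : ℂ)‖₊ := by
        rw [nnnorm_mul, nnnorm_neg, Complex.nnnorm_I, one_mul]
      rw [hnn]
      have hsub : L (a - star a) ≤ L a + L a := by
        have hrw : a - star a = a + (-1 : ℂ) • star a := by rw [neg_one_smul]; abel
        rw [hrw]
        refine (hLadd _ _).trans ?_
        rw [hLsmul]
        simp [hLstar]
      calc (‖(((2:ℝ)⁻¹ : ℝ) : ℂ)‖₊ : ℝ≥0∞) * L (a - star a)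
          ≤ (‖(((2:ℝ)⁻¹ : ℝ) : ℂ)‖₊ : ℝ≥0∞) * (L a + L a) := by gcongr
        _ = L a := hhalf
    have hLxf : L x ≠ ⊤ := ne_top_of_le_ne_top htop hLx
    have hLyf : L y ≠ ⊤ := ne_top_of_le_ne_top htop hLy
    have hxb := hest x hxsa hLxf
    have hyb := hest y hysa hLyf
    have hmono1 : (L x).toReal ≤ (L a).toReal := ENNReal.toReal_mono htop hLx
    have hmono2 : (L y).toReal ≤ (L a).toReal := ENNReal.toReal_mono htop hLy
    have hμI : μ (Complex.I • y) = Complex.I * μ y := by rw [map_smul, smul_eq_mul]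
    have hνI : ν (Complex.I • y) = Complex.I * ν y := hν_smul _ _
    have hdiffa : μ a - ν a = (μ x - ν x) + Complex.I * (μ y - ν y) := by
      conv_lhs => rw [ha]
      rw [map_add, hν_add, hμI, hνI]
      ring
    have hreal : ‖μ a - ν a‖ ≤ (ε:ℝ) * (L a).toReal := by
      have h1 : ‖μ a - ν a‖ ≤ ‖μ x - ν x‖ + ‖Complex.I * (μ y - ν y)‖ := by
        rw [hdiffa]; exact norm_add_le _ _
      have h2 : ‖Complex.I * (μ y - ν y)‖ = ‖μ y - ν y‖ := by
        rw [norm_mul, Complex.norm_I, one_mul]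
      rw [h2] at h1
      nlinarith [hε6, ENNReal.toReal_nonneg (a := L x), ENNReal.toReal_nonneg (a := L y)]
    show (‖μ a - ν a‖₊ : ℝ≥0∞) ≤ (ε : ℝ≥0∞) * L a
    rw [← ENNReal.coe_toNNReal htop, ← ENNReal.coe_mul, ENNReal.coe_le_coe, ← NNReal.coe_le_coe]
    push_cast
    exact hreal
end
end

section
/- Let α be an action of a coamenable compact quantum group (A, Δ) on a unital C*-algebra B, with continuous coidentity ε ∈ S(A). For a state ν ∈ S(A) define P_ν : B → B by P_ν(b) = (id_B ⊗ ν)α(b). Suppose L^A is a right-invariant regular Lip-norm on A, L^B(b) = sup_{φ∈S(B)} L^A((φ⊗id)α(b)), and ν satisfies |ε(a) − ν(a)| ≤ ε₀·L^A(a) for all a ∈ A (for some ε₀ > 0). Then for every self-adjoint b ∈ B: ‖b − P_ν(b)‖ ≤ ε₀·L^B(b). -/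
open scoped ComplexOrder ENNReal NNReal

noncomputable section

/-- An abstract model of the minimal C*-tensor product `T = A ⊗ B` of two unital
C*-algebras: a bilinear map `tmul` with dense span, multiplicative and `*`-compatible,
together with product functionals `μ ⊗ ν` (of norm `‖μ‖·‖ν‖`, as on the minimal tensor
product) and the two slice maps. -/
structure TensorData (A B T : Type*)
    [NormedRing A] [NormedAlgebra ℂ A] [StarRing A]
    [NormedRing B] [NormedAlgebra ℂ B] [StarRing B]
    [NormedRing T] [NormedAlgebra ℂ T] [StarRing T] where
  tmul : A →ₗ[ℂ] B →ₗ[ℂ] T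
  tmul_mul : ∀ (a a' : A) (b b' : B), tmul a b * tmul a' b' = tmul (a * a') (b * b')
  tmul_star : ∀ (a : A) (b : B), star (tmul a b) = tmul (star a) (star b)
  tmul_one : tmul 1 1 = 1
  tmul_norm : ∀ (a : A) (b : B), ‖tmul a b‖ = ‖a‖ * ‖b‖
  dense : Dense (↑(Submodule.span ℂ {x : T | ∃ a b, x = tmul a b}) : Set T)
  fmul : (A →L[ℂ] ℂ) → (B →L[ℂ] ℂ) → (T →L[ℂ] ℂ)
  fmul_apply : ∀ μ ν a b, fmul μ ν (tmul a b) = μ a * ν b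
  fmul_norm : ∀ μ ν, ‖fmul μ ν‖ = ‖μ‖ * ‖ν‖
  sliceL : (A →L[ℂ] ℂ) → (T →L[ℂ] B)   -- `μ ⊗ id`
  sliceL_apply : ∀ μ a b, sliceL μ (tmul a b) = μ a • b
  sliceR : (B →L[ℂ] ℂ) → (T →L[ℂ] A)   -- `id ⊗ ν`
  sliceR_apply : ∀ ν a b, sliceR ν (tmul a b) = ν b • a
  fmul_sliceL : ∀ μ ν x, fmul μ ν x = ν (sliceL μ x)
  fmul_sliceR : ∀ μ ν x, fmul μ ν x = μ (sliceR ν x)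

/-- An abstract model of a compact quantum group: a unital C*-algebra `A` with a
coassociative unital `*`-homomorphism `Δ : A → A ⊗ A` (minimal tensor product, modelled by
`TensorData`) satisfying the cancellation property. -/
structure CoMulData (A AA AAA : Type*)
    [NormedRing A] [NormedAlgebra ℂ A] [StarRing A]
    [NormedRing AA] [NormedAlgebra ℂ AA] [StarRing AA]
    [NormedRing AAA] [NormedAlgebra ℂ AAA] [StarRing AAA] where
  t : TensorData A A AA          -- `A ⊗ A`
  tL : TensorData AA A AAA       -- `(A ⊗ A) ⊗ A`
  tR : TensorData A AA AAA       -- `A ⊗ (A ⊗ A)`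
  assoc : ∀ (a b c : A), tL.tmul (t.tmul a b) c = tR.tmul a (t.tmul b c)
  delta : A →⋆ₐ[ℂ] AA
  delta_cont : Continuous ⇑delta
  deltaL : AA →ₗ[ℂ] AAA          -- `Δ ⊗ id`
  deltaL_apply : ∀ a b, deltaL (t.tmul a b) = tL.tmul (delta a) b
  deltaR : AA →ₗ[ℂ] AAA          -- `id ⊗ Δ`
  deltaR_apply : ∀ a b, deltaR (t.tmul a b) = tR.tmul a (delta b)
  coassoc : ∀ a, deltaL (delta a) = deltaR (delta a)
  cancel_left : Dense
    (↑(Submodule.span ℂ {x : AA | ∃ a b, x = t.tmul a 1 * delta b}) : Set AA)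
  cancel_right : Dense
    (↑(Submodule.span ℂ {x : AA | ∃ a b, x = t.tmul 1 a * delta b}) : Set AA)

/-- Convolution of continuous linear functionals: `μ * ν = (μ ⊗ ν) ∘ Δ`. -/
noncomputable def CoMulData.conv {A AA AAA : Type*}
    [NormedRing A] [NormedAlgebra ℂ A] [StarRing A]
    [NormedRing AA] [NormedAlgebra ℂ AA] [StarRing AA]
    [NormedRing AAA] [NormedAlgebra ℂ AAA] [StarRing AAA]
    (D : CoMulData A AA AAA) (μ ν : A →L[ℂ] ℂ) : A →L[ℂ] ℂ :=
  (D.t.fmul μ ν).comp ⟨D.delta.toAlgHom.toLinearMap, D.delta_cont⟩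

/-- An abstract model of a (left) action `α : B → B ⊗ A` of a compact quantum group
`(A, Δ)` on a unital C*-algebra `B`: an injective unital `*`-homomorphism satisfying
`(α ⊗ id)∘α = (id ⊗ Δ)∘α` and such that the span of `α(B)(1_B ⊗ A)` is dense in `B ⊗ A`. -/
structure ActionData (A AA AAA B BA BAA : Type*)
    [NormedRing A] [NormedAlgebra ℂ A] [StarRing A]
    [NormedRing AA] [NormedAlgebra ℂ AA] [StarRing AA]
    [NormedRing AAA] [NormedAlgebra ℂ AAA] [StarRing AAA]
    [NormedRing B] [NormedAlgebra ℂ B] [StarRing B]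
    [NormedRing BA] [NormedAlgebra ℂ BA] [StarRing BA]
    [NormedRing BAA] [NormedAlgebra ℂ BAA] [StarRing BAA] where
  Q : CoMulData A AA AAA
  tBA : TensorData B A BA        -- `B ⊗ A`
  alpha : B →⋆ₐ[ℂ] BA
  alpha_cont : Continuous ⇑alpha
  alpha_inj : Function.Injective ⇑alpha
  tBAA : TensorData BA A BAA     -- `(B ⊗ A) ⊗ A`
  tBAA' : TensorData B AA BAA    -- `B ⊗ (A ⊗ A)`
  assocBA : ∀ (b : B) (a a' : A),
    tBAA.tmul (tBA.tmul b a) a' = tBAA'.tmul b (Q.t.tmul a a')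
  alphaExt : BA →ₗ[ℂ] BAA        -- `α ⊗ id`
  alphaExt_apply : ∀ b a, alphaExt (tBA.tmul b a) = tBAA.tmul (alpha b) a
  deltaExt : BA →ₗ[ℂ] BAA        -- `id ⊗ Δ`
  deltaExt_apply : ∀ b a, deltaExt (tBA.tmul b a) = tBAA'.tmul b (Q.delta a)
  action_eq : ∀ b, alphaExt (alpha b) = deltaExt (alpha b)
  cancelBA : Dense
    (↑(Submodule.span ℂ {x : BA | ∃ b a, x = alpha b * tBA.tmul 1 a}) : Set BA)

section Aux
variable {A : Type*} [NormedRing A] [StarRing A] [CStarRing A] [NormedAlgebra ℂ A]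
  [StarModule ℂ A] [CompleteSpace A]

lemma aux_isState_of_norm_le (g : A →L[ℂ] ℂ) (h1 : g 1 = 1) (hn : ‖g‖ ≤ 1) : IsState g := by
  letI : CStarAlgebra A := {}
  have hone : (1 : A) ≠ 0 := by
    intro h
    rw [h, map_zero] at h1
    exact one_ne_zero h1.symm
  haveI : Nontrivial A := nontrivial_of_ne 1 0 hone
  refine ⟨h1, fun a => ?_⟩
  set y := star a * a with hy_def
  have hy : IsSelfAdjoint y := IsSelfAdjoint.star_mul_self a
  set r := ‖y‖ with hr
  have hr0 : (0 : ℝ) ≤ r := norm_nonneg y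
  -- imaginary part of `g y` is zero
  have him : (g y).im = 0 := by
    by_contra hs
    set s := (g y).im with hsdef
    have key : ∀ t : ℝ, (s + t) ^ 2 ≤ r ^ 2 + t ^ 2 := by
      intro t
      set c : ℂ := (t : ℂ) * Complex.I with hc
      have hstar : star (y + c • (1 : A)) = y - c • (1 : A) := by
        rw [star_add, hy.star_eq, star_smul, star_one, sub_eq_add_neg, ← neg_smul]
        congr 1
        rw [hc]
        simp [Complex.conj_I]
      have hmul : (y - c • (1 : A)) * (y + c • (1 : A)) = y * y + ((t : ℂ) ^ 2) • (1 : A) := by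
        have hcc : c * c = -((t : ℂ) ^ 2) := by
          rw [hc, mul_mul_mul_comm, Complex.I_mul_I]; push_cast; ring
        simp only [sub_mul, mul_add, smul_sub, smul_mul_assoc, mul_smul_comm, one_mul,
          mul_one, smul_smul, hcc]
        rw [neg_smul]
        abel
      have hnorm2 : ‖y + c • (1 : A)‖ ^ 2 ≤ r ^ 2 + t ^ 2 := by
        have hcs : ‖y + c • (1 : A)‖ * ‖y + c • (1 : A)‖ = ‖star (y + c • (1 : A)) * (y + c • (1 : A))‖ :=
          (CStarRing.norm_star_mul_self).symm
        rw [sq, hcs, hstar, hmul]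
        calc ‖y * y + ((t : ℂ) ^ 2) • (1 : A)‖ ≤ ‖y * y‖ + ‖((t : ℂ) ^ 2) • (1 : A)‖ :=
              norm_add_le _ _
          _ ≤ r * r + t ^ 2 := by
              gcongr
              · exact norm_mul_le y y
              · rw [norm_smul, norm_one, mul_one]
                push_cast
                rw [← Complex.ofReal_pow]
                simp [sq_abs, le_of_eq, abs_of_nonneg (sq_nonneg t)]
          _ = r ^ 2 + t ^ 2 := by ring
      have hgval : g (y + c • (1 : A)) = g y + c := by
        rw [map_add, map_smul, h1, smul_eq_mul, mul_one]
      have hb : ‖g (y + c • (1 : A))‖ ≤ ‖y + c • (1 : A)‖ := by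
        calc ‖g (y + c • (1 : A))‖ ≤ ‖g‖ * ‖y + c • (1 : A)‖ := g.le_opNorm _
          _ ≤ 1 * ‖y + c • (1 : A)‖ := by gcongr
          _ = _ := one_mul _
      have him2 : (s + t) ^ 2 ≤ ‖g y + c‖ ^ 2 := by
        have h1' : (g y + c).im = s + t := by
          simp [hc, hsdef]
        have h2' : ‖g y + c‖ ^ 2 = (g y + c).re ^ 2 + (g y + c).im ^ 2 := by
          rw [Complex.sq_norm, Complex.normSq_apply]; ring
        rw [h2', h1']
        nlinarith [sq_nonneg ((g y + c).re)]
      calc (s + t) ^ 2 ≤ ‖g y + c‖ ^ 2 := him2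
        _ = ‖g (y + c • (1 : A))‖ ^ 2 := by rw [hgval]
        _ ≤ ‖y + c • (1 : A)‖ ^ 2 := by gcongr
        _ ≤ r ^ 2 + t ^ 2 := hnorm2
    have hk := key ((r ^ 2 + 1) / (2 * s))
    have h2st : 2 * s * ((r ^ 2 + 1) / (2 * s)) = r ^ 2 + 1 := by field_simp
    nlinarith [sq_nonneg s]
  -- the real part
  have hyr : ‖y - (r : ℂ) • (1 : A)‖ ≤ r := by
    have halg : (r : ℂ) • (1 : A) = algebraMap ℝ A r := by
      rw [IsScalarTower.algebraMap_apply ℝ ℂ A, Algebra.algebraMap_eq_smul_one]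
      norm_num
    have hcfc : y - (r : ℂ) • (1 : A) = cfc (fun u : ℝ => u - r) y := by
      rw [cfc_sub (fun u : ℝ => u) (fun _ : ℝ => r) y, cfc_id' (R := ℝ) y hy, cfc_const r y hy, halg]
    rw [hcfc]
    apply norm_cfc_le hr0
    intro u hu
    have hu0 : (0 : ℝ) ≤ u := spectrum_star_mul_self_nonneg (b := a) u hu
    have hur : u ≤ r := by
      have h := spectrum.norm_le_norm_of_mem hu
      rw [Real.norm_eq_abs, abs_of_nonneg hu0] at h
      exact h
    rw [Real.norm_eq_abs, abs_sub_comm, abs_of_nonneg (by linarith)]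
    linarith
  have hgyr : ‖g y - (r : ℂ)‖ ≤ r := by
    have hval : g (y - (r : ℂ) • 1) = g y - r := by
      rw [map_sub, map_smul, h1, smul_eq_mul, mul_one]
    calc ‖g y - (r : ℂ)‖ = ‖g (y - (r : ℂ) • 1)‖ := by rw [hval]
      _ ≤ ‖g‖ * ‖y - (r : ℂ) • 1‖ := g.le_opNorm _
      _ ≤ 1 * r := mul_le_mul hn hyr (norm_nonneg _) zero_le_one
      _ = r := one_mul r
  rw [Complex.le_def]
  refine ⟨?_, by simp [him]⟩
  have habs := Complex.abs_re_le_norm (g y - (r : ℂ))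
  have h3 : |(g y).re - r| ≤ r := by
    have : (g y - (r : ℂ)).re = (g y).re - r := by simp
    rw [this] at habs
    exact habs.trans hgyr
  rw [abs_le] at h3
  simp only [Complex.zero_re]
  linarith [h3.1]

lemma aux_state_hermitian (μ : A →L[ℂ] ℂ) (hμ : IsState μ) (a : A) :
    μ (star a) = starRingEnd ℂ (μ a) := by
  have hreal : ∀ c : A, star c = c → (μ c).im = 0 := by
    intro c hc
    have h2 := hμ.2 c
    have h2im : (μ (star c * c)).im = 0 := by
      rw [Complex.le_def] at h2
      exact h2.2.symm
    have h1 := hμ.2 (1 + c)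
    have e : star (1 + c) * (1 + c) = 1 + c + c + star c * c := by
      nth_rewrite 3 [← hc]
      rw [star_add, star_one, add_mul, one_mul, mul_add, mul_one]
      rw [hc]
      abel
    rw [Complex.le_def, e] at h1
    have h1im := h1.2.symm
    simp only [map_add, Complex.add_im, hμ.1] at h1im
    simp only [Complex.one_im, Complex.zero_im] at h1im
    linarith [h1im, h2im]
  have hu : (μ (a + star a)).im = 0 := hreal _ (by rw [star_add, star_star]; abel)
  have hv : (μ (Complex.I • (a - star a))).im = 0 := by
    refine hreal _ ?_
    rw [star_smul, star_sub, star_star]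
    rw [Complex.star_def, Complex.conj_I, neg_smul, smul_sub, smul_sub]
    abel
  have hw1 : μ a + μ (star a) = μ (a + star a) := (map_add μ a (star a)).symm
  have hw2 : Complex.I * (μ a - μ (star a)) = μ (Complex.I • (a - star a)) := by
    rw [map_smul, map_sub, smul_eq_mul]
  apply Complex.ext
  · -- real parts
    have : (Complex.I * (μ a - μ (star a))).im = 0 := by rw [hw2, hv]
    simp only [Complex.mul_im, Complex.I_re, Complex.I_im, Complex.sub_re, Complex.sub_im,
      zero_mul, one_mul, zero_add] at this
    simp only [Complex.conj_re]
    linarith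
  · have : (μ a + μ (star a)).im = 0 := by rw [hw1, hu]
    simp only [Complex.add_im] at this
    simp only [Complex.conj_im]
    linarith

lemma aux_exists_state [Nontrivial A] (x : A) (hx : IsSelfAdjoint x) :
    ∃ φ : A →L[ℂ] ℂ, IsState φ ∧ ‖x‖ ≤ ‖φ x‖ := by
  letI : CStarAlgebra A := {}
  haveI := hx.isStarNormal
  obtain ⟨z, hz, hznorm⟩ := spectrum.exists_nnnorm_eq_spectralRadius (a := x)
  have hzx : ‖z‖ = ‖x‖ := by
    rw [hx.spectralRadius_eq_nnnorm] at hznorm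
    exact_mod_cast congrArg ENNReal.toReal hznorm
  set S : StarSubalgebra ℂ A := StarAlgebra.elemental ℂ x with hS
  haveI : IsClosed (S : Set A) := StarAlgebra.elemental.isClosed ℂ x
  letI : NormedCommRing ↥S :=
    { (inferInstance : NormedRing ↥S), (inferInstance : CommRing ↥S) with }
  set x' : ↥S := ⟨x, StarAlgebra.elemental.self_mem ℂ x⟩ with hx'
  have hzS : z ∈ spectrum ℂ x' := by
    rw [StarSubalgebra.spectrum_eq]
    exact hz
  obtain ⟨f, hf⟩ := WeakDual.CharacterSpace.mem_spectrum_iff_exists.mp hzS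
  have hfb : ∀ u : ↥S, ‖f u‖ ≤ ‖u‖ := by
    intro u
    exact spectrum.norm_le_norm_of_mem (AlgHom.apply_mem_spectrum f u)
  set p : Submodule ℂ A := Subalgebra.toSubmodule S.toSubalgebra with hp
  have hmem : ∀ v : ↥p, (v : A) ∈ S := fun v => v.2
  let l : ↥p →ₗ[ℂ] ℂ :=
    { toFun := fun v => f ⟨(v : A), hmem v⟩
      map_add' := fun v w => map_add f ⟨(v : A), hmem v⟩ ⟨(w : A), hmem w⟩
      map_smul' := fun c v => map_smul f c ⟨(v : A), hmem v⟩ }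
  have hlb : ∀ v : ↥p, ‖l v‖ ≤ 1 * ‖v‖ := by
    intro v
    rw [one_mul]
    exact hfb _
  let f' : ↥p →L[ℂ] ℂ := LinearMap.mkContinuous l 1 hlb
  obtain ⟨g, hg, hgn⟩ := exists_extension_norm_eq p f'
  have hgnorm : ‖g‖ ≤ 1 := by
    rw [hgn]
    exact LinearMap.mkContinuous_norm_le l zero_le_one hlb
  have h1p : (1 : A) ∈ p := (Subalgebra.mem_toSubmodule _).mpr (one_mem _)
  have hxp : x ∈ p := (Subalgebra.mem_toSubmodule _).mpr (StarAlgebra.elemental.self_mem ℂ x)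
  have hg1 : g 1 = 1 := (hg ⟨1, h1p⟩).trans (map_one f)
  have hgx : g x = z := (hg ⟨x, hxp⟩).trans hf
  exact ⟨g, aux_isState_of_norm_le g hg1 hgnorm, by rw [hgx]; exact hzx.symm.le⟩

end Aux

/-- Let `α` be an action of a coamenable compact quantum group `(A, Δ)` on a
unital C*-algebra `B`, with continuous coidentity `ε ∈ S(A)`.  For a state `ν ∈ S(A)` let
`P_ν(b) = (id_B ⊗ ν)α(b)`.  If `L^A` is a right-invariant regular Lip-norm on `A`,
`L^B(b) = sup_{φ∈S(B)} L^A((φ⊗id)α(b))`, and `|ε(a) − ν(a)| ≤ ε₀·L^A(a)` for all `a`, then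
for every self-adjoint `b ∈ B`: `‖b − P_ν(b)‖ ≤ ε₀·L^B(b)`. -/
theorem stmt12 {A AA AAA B BA BAA : Type*}
    [NormedRing A] [StarRing A] [CStarRing A] [NormedAlgebra ℂ A] [StarModule ℂ A]
    [CompleteSpace A]
    [NormedRing AA] [StarRing AA] [CStarRing AA] [NormedAlgebra ℂ AA] [StarModule ℂ AA]
    [CompleteSpace AA]
    [NormedRing AAA] [StarRing AAA] [CStarRing AAA] [NormedAlgebra ℂ AAA]
    [StarModule ℂ AAA] [CompleteSpace AAA]
    [NormedRing B] [StarRing B] [CStarRing B] [NormedAlgebra ℂ B] [StarModule ℂ B]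
    [CompleteSpace B]
    [NormedRing BA] [StarRing BA] [CStarRing BA] [NormedAlgebra ℂ BA] [StarModule ℂ BA]
    [CompleteSpace BA]
    [NormedRing BAA] [StarRing BAA] [CStarRing BAA] [NormedAlgebra ℂ BAA]
    [StarModule ℂ BAA] [CompleteSpace BAA]
    (E : ActionData A AA AAA B BA BAA)
    -- the coidentity, a continuous character, with `(id_B ⊗ ε)∘α = id_B`
    (eps : A →L[ℂ] ℂ) (heps_state : IsState eps)
    (heps_mul : ∀ a a' : A, eps (a * a') = eps a * eps a')
    (heps_counitL : ∀ a : A, E.Q.t.sliceL eps (E.Q.delta a) = a)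
    (heps_counitR : ∀ a : A, E.Q.t.sliceR eps (E.Q.delta a) = a)
    (heps_alpha : ∀ b : B, E.tBA.sliceR eps (E.alpha b) = b)
    (L : A → ℝ≥0∞)
    (hLstar : ∀ a : A, L (star a) = L a)
    (hL0 : ∀ a : A, L a = 0 ↔ ∃ z : ℂ, a = z • (1 : A))
    (hLadd : ∀ a b : A, L (a + b) ≤ L a + L b)
    (hLsmul : ∀ (z : ℂ) (a : A), L (z • a) = (‖z‖₊ : ℝ≥0∞) * L a)
    (hLdense : Dense {a : A | L a < ⊤})
    (hLlsc : LowerSemicontinuous L)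
    (hLtb : ∀ ε : ℝ, 0 < ε → ∃ F : Finset A, ∀ a : A, star a = a → L a ≤ 1 →
      ∃ b ∈ F, ∃ t : ℝ, ‖a - b - (t : ℂ) • (1 : A)‖ ≤ ε)
    -- right-invariance of `L^A`
    (hrinv : ∀ a : A, star a = a → ∀ μ : A →L[ℂ] ℂ, IsState μ →
      L (E.Q.t.sliceL μ (E.Q.delta a)) ≤ L a)
    (ν : A →L[ℂ] ℂ) (hν : IsState ν)
    (ε₀ : ℝ≥0) (hε₀ : 0 < ε₀)
    (happrox : ∀ a : A, (‖eps a - ν a‖₊ : ℝ≥0∞) ≤ (ε₀ : ℝ≥0∞) * L a) :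
    ∀ b : B, star b = b →
      (‖b - E.tBA.sliceR ν (E.alpha b)‖₊ : ℝ≥0∞) ≤
        (ε₀ : ℝ≥0∞) * ⨆ φ : {φ : B →L[ℂ] ℂ // IsState φ},
          L (E.tBA.sliceL (φ : B →L[ℂ] ℂ) (E.alpha b)) := by
  intro b hb
  rcases subsingleton_or_nontrivial B with hB | hB
  · have hzero : b - E.tBA.sliceR ν (E.alpha b) = 0 := Subsingleton.elim _ _
    rw [hzero]
    simp
  · have hherm := aux_state_hermitian ν hν
    have hPstar : ∀ x : BA, star (E.tBA.sliceR ν x) = E.tBA.sliceR ν (star x) := by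
      have hcont1 : Continuous (fun x : BA => star (E.tBA.sliceR ν x)) :=
        continuous_star.comp (E.tBA.sliceR ν).continuous
      have hcont2 : Continuous (fun x : BA => E.tBA.sliceR ν (star x)) :=
        (E.tBA.sliceR ν).continuous.comp continuous_star
      have heq : (fun x : BA => star (E.tBA.sliceR ν x))
          = fun x : BA => E.tBA.sliceR ν (star x) := by
        apply Continuous.ext_on E.tBA.dense hcont1 hcont2
        intro u hu
        induction hu using Submodule.span_induction with
        | mem u hu =>
            obtain ⟨bb, aa, rfl⟩ := hu
            show star (E.tBA.sliceR ν (E.tBA.tmul bb aa))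
              = E.tBA.sliceR ν (star (E.tBA.tmul bb aa))
            rw [E.tBA.sliceR_apply, E.tBA.tmul_star, E.tBA.sliceR_apply, star_smul, hherm aa]
            rfl
        | zero => simp
        | add u v _ _ hu hv =>
            show star (E.tBA.sliceR ν (u + v)) = E.tBA.sliceR ν (star (u + v))
            rw [map_add, star_add, star_add, map_add]
            exact congrArg₂ (· + ·) hu hv
        | smul c u _ hu =>
            show star (E.tBA.sliceR ν (c • u)) = E.tBA.sliceR ν (star (c • u))
            rw [map_smul, star_smul, star_smul, map_smul]
            exact congrArg (star c • ·) hu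
      intro x
      exact congrFun heq x
    have hPb : star (E.tBA.sliceR ν (E.alpha b)) = E.tBA.sliceR ν (E.alpha b) := by
      rw [hPstar, ← map_star E.alpha b, hb]
    have hx : IsSelfAdjoint (b - E.tBA.sliceR ν (E.alpha b)) := by
      rw [IsSelfAdjoint, star_sub, hb, hPb]
    obtain ⟨φ, hφ, hφx⟩ := aux_exists_state _ hx
    set cφ := E.tBA.sliceL φ (E.alpha b) with hcφ
    have e1 : φ b = eps cφ := by
      conv_lhs => rw [← heps_alpha b]
      rw [← E.tBA.fmul_sliceR φ eps (E.alpha b), E.tBA.fmul_sliceL]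
    have e2 : φ (E.tBA.sliceR ν (E.alpha b)) = ν cφ := by
      rw [← E.tBA.fmul_sliceR φ ν (E.alpha b), E.tBA.fmul_sliceL]
    have key : φ (b - E.tBA.sliceR ν (E.alpha b)) = eps cφ - ν cφ := by
      rw [map_sub, e1, e2]
    calc (‖b - E.tBA.sliceR ν (E.alpha b)‖₊ : ℝ≥0∞)
        ≤ (‖φ (b - E.tBA.sliceR ν (E.alpha b))‖₊ : ℝ≥0∞) := by exact_mod_cast hφx
      _ = (‖eps cφ - ν cφ‖₊ : ℝ≥0∞) := by rw [key]
      _ ≤ (ε₀ : ℝ≥0∞) * L cφ := happrox cφ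
      _ ≤ _ := mul_le_mul_right (le_iSup (fun ψ : {ψ : B →L[ℂ] ℂ // IsState ψ} =>
            L (E.tBA.sliceL (ψ : B →L[ℂ] ℂ) (E.alpha b))) ⟨φ, hφ⟩) _
end
end
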